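/- The polynomial 𝒬_n(x) = Σ_{j=0}^{⌊(n-1)/2⌋} (-1)^j (C(n-1,j) - C(n-1,j-1)) x^{n-2j} (with 𝒬_0 = 1) equals the total weight of all lattice paths of n steps starting at (0,0) which use steps (1,1) of weight x and (1,-1) of weight -1/x and stay strictly above the horizontal axis after the start; formally, 𝒬_n(x) = Σ_{λ ∈ {-1,1}^n : λ_1+⋯+λ_i > 0 for all 1 ≤ i ≤ n} (-1)^{#{i : λ_i = -1}} x^{λ_1+⋯+λ_n}. -/

import Mathlib

open Polynomial

/-- The binomial coefficient `C(a,b)` for integer arguments, with the convention that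
`C(a,b) = 0` unless `0 ≤ b ≤ a`. -/
def Cb (a b : ℤ) : ℚ :=
  if 0 ≤ b ∧ b ≤ a then (a.toNat.choose b.toNat : ℚ) else 0

/-- `𝒬_0(x) = 1` and
`𝒬_n(x) = Σ_{j=0}^{⌊(n-1)/2⌋} (-1)^j (C(n-1,j) - C(n-1,j-1)) x^{n-2j}` for `n ≥ 1`. -/
noncomputable def QQ : ℕ → Polynomial ℚ
  | 0 => 1
  | (n + 1) =>
      ∑ j ∈ Finset.range (n / 2 + 1),
        Polynomial.C ((-1 : ℚ) ^ j * (Cb n j - Cb n ((j : ℤ) - 1))) *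
          Polynomial.X ^ (n + 1 - 2 * j)

/-- The step `λ_i ∈ {-1,1}` encoded by a boolean: `true ↦ 1`, `false ↦ -1`. -/
def step {n : ℕ} (f : Fin n → Bool) (i : Fin n) : ℤ := if f i then 1 else -1

open Finset

-- basic Cb lemmas
lemma Cb_natCast (a b : ℕ) : Cb a b = (a.choose b : ℚ) := by
  unfold Cb
  split
  · simp
  · next h =>
    push_neg at h
    have hb : (a:ℤ) < b := h (by positivity)
    rw [Nat.choose_eq_zero_of_lt (by exact_mod_cast hb)]
    simp

lemma Cb_neg (a : ℤ) (b : ℤ) (hb : b < 0) : Cb a b = 0 := by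
  unfold Cb; rw [if_neg]; rintro ⟨h, -⟩; omega

lemma Cb_pascal (m : ℕ) (k : ℤ) : Cb (m+1) k = Cb m k + Cb m (k-1) := by
  rcases lt_or_ge k 0 with h | h
  · rw [Cb_neg _ _ h, Cb_neg _ _ h, Cb_neg _ _ (by omega), zero_add]
  obtain ⟨b, rfl⟩ := Int.eq_ofNat_of_zero_le h
  have hm : ((m:ℤ)+1) = ((m+1:ℕ):ℤ) := by push_cast; ring
  cases b with
  | zero =>
      have h0 : ((0:ℕ):ℤ) - 1 < 0 := by norm_num
      rw [hm, Cb_neg _ _ h0, Cb_natCast, Cb_natCast]; simp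
  | succ b =>
      have h1 : ((b+1:ℕ):ℤ) - 1 = ((b:ℕ):ℤ) := by push_cast; ring
      rw [hm, h1, Cb_natCast, Cb_natCast, Cb_natCast, Nat.choose_succ_succ]
      push_cast; ring

def Pos (n : ℕ) : Finset (Fin n → Bool) :=
  Finset.univ.filter (fun f => ∀ i : Fin n, 0 < ∑ j ∈ Finset.Iic i, step f j)

def kdown {n : ℕ} (f : Fin n → Bool) : ℕ :=
  (Finset.univ.filter (fun i : Fin n => f i = false)).card

def Nk (n k : ℕ) : ℕ := ((Pos n).filter (fun f => kdown f = k)).card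

lemma Iic_castSucc {n : ℕ} (i : Fin n) :
    Finset.Iic (Fin.castSucc i) = (Finset.Iic i).map Fin.castSuccEmb := by
  ext j
  simp only [Finset.mem_Iic, Finset.mem_map, Fin.coe_castSuccEmb]
  constructor
  · intro hj
    have hjn : (j : ℕ) < n := lt_of_le_of_lt (by simpa [Fin.le_def] using hj) i.isLt
    exact ⟨⟨j, hjn⟩, by simpa [Fin.le_def] using hj, Fin.ext rfl⟩
  · rintro ⟨a, ha, rfl⟩
    exact Fin.castSucc_le_castSucc_iff.mpr ha

lemma Iic_last {n : ℕ} : Finset.Iic (Fin.last n) = Finset.univ := by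
  ext j; simp [Fin.le_last]

lemma step_snoc_castSucc {n : ℕ} (g : Fin n → Bool) (b : Bool) (i : Fin n) :
    step (Fin.snoc g b) (Fin.castSucc i) = step g i := by
  simp [step, Fin.snoc_castSucc]

lemma psum_snoc {n : ℕ} (g : Fin n → Bool) (b : Bool) (i : Fin n) :
    ∑ j ∈ Finset.Iic (Fin.castSucc i), step (Fin.snoc g b) j
      = ∑ j ∈ Finset.Iic i, step g j := by
  rw [Iic_castSucc, Finset.sum_map]
  exact Finset.sum_congr rfl (fun j _ => step_snoc_castSucc g b j)

lemma tot_snoc {n : ℕ} (g : Fin n → Bool) (b : Bool) :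
    ∑ j : Fin (n+1), step (Fin.snoc g b) j
      = (∑ j : Fin n, step g j) + (if b then 1 else -1) := by
  rw [Fin.sum_univ_castSucc]
  simp only [step, Fin.snoc_last]
  congr 1
  exact Finset.sum_congr rfl (fun j _ => step_snoc_castSucc g b j)

lemma kdown_snoc {n : ℕ} (g : Fin n → Bool) (b : Bool) :
    kdown (Fin.snoc g b) = kdown g + (if b then 0 else 1) := by
  unfold kdown
  rw [Finset.card_filter, Finset.card_filter, Fin.sum_univ_castSucc]
  simp [Fin.snoc_castSucc, Fin.snoc_last]
  cases b <;> simp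

lemma mem_Pos {n : ℕ} (f : Fin n → Bool) :
    f ∈ Pos n ↔ ∀ i, 0 < ∑ j ∈ Finset.Iic i, step f j := by
  simp [Pos]

lemma tot_eq {n : ℕ} (f : Fin n → Bool) :
    ∑ j : Fin n, step f j = (n : ℤ) - 2 * kdown f := by
  have h : ∀ j : Fin n, step f j = 1 - 2 * (if f j = false then (1:ℤ) else 0) := by
    intro j; cases hj : f j <;> simp [step, hj]
  rw [Finset.sum_congr rfl (fun j _ => h j), Finset.sum_sub_distrib, ← Finset.mul_sum]
  rw [Finset.sum_const, Finset.sum_boole]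
  simp [kdown]

lemma tot_pos {n : ℕ} (f : Fin (n+1) → Bool) (hf : f ∈ Pos (n+1)) :
    0 < ∑ j : Fin (n+1), step f j := by
  have := (mem_Pos f).1 hf (Fin.last n)
  rwa [Iic_last] at this

lemma tot_nonneg {n : ℕ} (f : Fin n → Bool) (hf : f ∈ Pos n) :
    0 ≤ ∑ j : Fin n, step f j := by
  cases n with
  | zero => simp
  | succ m => exact le_of_lt (tot_pos f hf)

lemma snoc_mem_Pos {n : ℕ} (g : Fin n → Bool) (b : Bool) :
    Fin.snoc g b ∈ Pos (n+1)
      ↔ g ∈ Pos n ∧ 0 < (∑ j : Fin n, step g j) + (if b then 1 else -1) := by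
  simp only [mem_Pos]
  constructor
  · intro h
    refine ⟨fun i => ?_, ?_⟩
    · have := h (Fin.castSucc i); rwa [psum_snoc] at this
    · have := h (Fin.last n); rwa [Iic_last, tot_snoc] at this
  · rintro ⟨h1, h2⟩ i
    refine Fin.lastCases ?_ ?_ i
    · rwa [Iic_last, tot_snoc]
    · intro i; rw [psum_snoc]; exact h1 i

lemma Nk_eq_zero {n k : ℕ} (hn : 1 ≤ n) (h : n ≤ 2 * k) : Nk n k = 0 := by
  rw [Nk, Finset.card_eq_zero, Finset.filter_eq_empty_iff]
  intro f hf
  intro h2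
  obtain ⟨m, rfl⟩ : ∃ m, n = m + 1 := ⟨n - 1, by omega⟩
  have h3 := tot_pos f hf
  rw [tot_eq, h2] at h3
  omega

lemma sum_snoc_eq {n : ℕ} {M : Type} [AddCommMonoid M] (h : (Fin (n+1) → Bool) → M) :
    (∑ f : Fin (n+1) → Bool, h f)
      = (∑ g : Fin n → Bool, h (Fin.snoc g true))
        + (∑ g : Fin n → Bool, h (Fin.snoc g false)) := by
  rw [← (Fin.snocEquiv (fun _ => Bool)).sum_comp (fun f => h f)]
  rw [Fintype.sum_prod_type, Fintype.sum_bool]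
  simp [Fin.snocEquiv]

lemma card_snoc_filter (n : ℕ) (p : (Fin (n+1) → Bool) → Prop) [DecidablePred p] :
    (Finset.univ.filter p).card
      = (Finset.univ.filter (fun g : Fin n → Bool => p (Fin.snoc g true))).card
      + (Finset.univ.filter (fun g : Fin n → Bool => p (Fin.snoc g false))).card := by
  rw [Finset.card_filter, Finset.card_filter, Finset.card_filter]
  exact sum_snoc_eq _

lemma Nk_as_filter (n k : ℕ) :
    Nk n k = (Finset.univ.filter (fun f : Fin n → Bool =>
        (∀ i, 0 < ∑ j ∈ Finset.Iic i, step f j) ∧ kdown f = k)).card := by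
  rw [Nk, Pos, Finset.filter_filter]

lemma filter_Pos_eq {n : ℕ} (q : (Fin n → Bool) → Prop) [DecidablePred q] :
    Finset.univ.filter (fun f => f ∈ Pos n ∧ q f) = (Pos n).filter q := by
  ext f; simp [Finset.mem_filter]

lemma snoc_cond {n : ℕ} (g : Fin n → Bool) (b : Bool) (k : ℕ) :
    ((∀ i, 0 < ∑ j ∈ Finset.Iic i, step (Fin.snoc g b) j) ∧ kdown (Fin.snoc g b) = k)
    ↔ ((g ∈ Pos n ∧ 0 < (∑ j : Fin n, step g j) + (if b then 1 else -1))
        ∧ kdown g + (if b then 0 else 1) = k) := by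
  rw [← mem_Pos, snoc_mem_Pos, kdown_snoc]

lemma Nk_rec (n k : ℕ) :
    Nk (n+1) k = Nk n k + ((Pos n).filter (fun g =>
        kdown g + 1 = k ∧ 0 < (∑ j : Fin n, step g j) - 1)).card := by
  rw [Nk_as_filter (n+1) k, card_snoc_filter]
  congr 1
  · rw [Nk, ← filter_Pos_eq]
    apply congrArg Finset.card
    apply Finset.filter_congr
    intro g _
    rw [snoc_cond]
    simp only [if_true]
    constructor
    · rintro ⟨⟨h1, _⟩, h2⟩; exact ⟨h1, by simpa using h2⟩
    · rintro ⟨h1, h2⟩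
      exact ⟨⟨h1, by have := tot_nonneg g h1; omega⟩, by simpa using h2⟩
  · rw [← filter_Pos_eq]
    apply congrArg Finset.card
    apply Finset.filter_congr
    intro g _
    rw [snoc_cond]
    simp only [Bool.false_eq_true, if_false]
    constructor
    · rintro ⟨⟨h1, h2⟩, h3⟩; exact ⟨h1, h3, by omega⟩
    · rintro ⟨h1, h2, h3⟩; exact ⟨⟨h1, by omega⟩, h2⟩

lemma Nk_rec_zero (n : ℕ) : Nk (n+1) 0 = Nk n 0 := by
  rw [Nk_rec]
  have : ((Pos n).filter (fun g =>
      kdown g + 1 = 0 ∧ 0 < (∑ j : Fin n, step g j) - 1)).card = 0 := by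
    rw [Finset.card_eq_zero, Finset.filter_eq_empty_iff]
    rintro g - ⟨h, -⟩
    omega
  omega

lemma Nk_rec_succ (n k : ℕ) :
    Nk (n+1) (k+1) = Nk n (k+1) + (if 2*(k+1) ≤ n then Nk n k else 0) := by
  rw [Nk_rec]
  congr 1
  by_cases hc : 2*(k+1) ≤ n
  · rw [if_pos hc, Nk]
    apply congrArg Finset.card
    apply Finset.filter_congr
    intro g hg
    rw [tot_eq g]
    constructor
    · rintro ⟨h1, h2⟩; omega
    · intro h1; refine ⟨by omega, by omega⟩
  · rw [if_neg hc, Finset.card_eq_zero, Finset.filter_eq_empty_iff]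
    rintro g hg ⟨h1, h2⟩
    rw [tot_eq g] at h2
    omega

lemma Nk_zero_zero : Nk 0 0 = 1 := by
  simp [Nk, Pos, kdown, Finset.univ_unique]

lemma Cb_zero (a : ℕ) : Cb a 0 = 1 := by
  rw [show ((0:ℤ)) = ((0:ℕ):ℤ) by simp, Cb_natCast]
  simp

lemma Nk_closed : ∀ n k : ℕ, 2*k ≤ n → (Nk (n+1) k : ℚ) = Cb n k - Cb n ((k:ℤ) - 1) := by
  intro n
  induction n with
  | zero =>
    intro k hk
    have hk0 : k = 0 := by omega
    subst hk0
    rw [Nk_rec_zero, Nk_zero_zero, Cb_natCast 0 0,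
      Cb_neg _ _ (by norm_num : ((0:ℕ):ℤ) - 1 < 0)]
    norm_num
  | succ m ih =>
    intro k hk
    cases k with
    | zero =>
      rw [Nk_rec_zero, ih 0 (by omega), Cb_natCast m 0, Cb_natCast (m+1) 0,
        Cb_neg _ _ (by norm_num : ((0:ℕ):ℤ) - 1 < 0),
        Cb_neg _ _ (by norm_num : ((0:ℕ):ℤ) - 1 < 0)]
      simp
    | succ k' =>
      rw [Nk_rec_succ, if_pos (by omega)]
      by_cases h2 : 2*(k'+1) ≤ m
      · push_cast [ih (k'+1) h2, ih k' (by omega)]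
        rw [show ((k':ℤ)+1) - 1 = (k':ℤ) by ring, Cb_pascal m ((k':ℤ)+1), Cb_pascal m (k':ℤ)]
        ring
      · have hm : m = 2*k' + 1 := by omega
        rw [Nk_eq_zero (n := m+1) (by omega) (by omega)]
        push_cast [ih k' (by omega)]
        have hsymm : Cb (m:ℤ) ((k':ℤ)+1) = Cb (m:ℤ) (k':ℤ) := by
          rw [show ((k':ℤ)+1) = ((k'+1:ℕ):ℤ) by push_cast; ring, Cb_natCast, Cb_natCast]
          norm_cast
          rw [hm, ← Nat.choose_symm (by omega : k'+1 ≤ 2*k'+1)]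
          congr 1
          omega
        rw [show ((k':ℤ)+1) - 1 = (k':ℤ) by ring, Cb_pascal m ((k':ℤ)+1), Cb_pascal m (k':ℤ),
          hsymm]
        ring

/-- `𝒬_n(x)` equals the total weight of all `λ ∈ {-1,1}^n` all of whose partial sums
`λ_1 + ⋯ + λ_i` are strictly positive, where `λ` has weight
`(-1)^{#{i : λ_i = -1}} x^{λ_1 + ⋯ + λ_n}`. -/
theorem stmt7 (n : ℕ) :
    QQ n =
      ∑ f ∈ Finset.univ.filter
          (fun f : Fin n → Bool => ∀ i : Fin n, 0 < ∑ j ∈ Finset.Iic i, step f j),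
        Polynomial.C ((-1 : ℚ) ^ (Finset.univ.filter (fun i : Fin n => f i = false)).card) *
          Polynomial.X ^ (∑ j : Fin n, step f j).toNat := by
  cases n with
  | zero =>
    show (1 : Polynomial ℚ) = _
    rw [Finset.filter_true_of_mem (fun f _ i => i.elim0)]
    rw [Finset.univ_unique, Finset.sum_singleton]
    simp
  | succ m =>
    have hQ : QQ (m+1) = ∑ j ∈ Finset.range (m / 2 + 1),
        Polynomial.C ((-1 : ℚ) ^ j * (Cb m j - Cb m ((j : ℤ) - 1))) *
          Polynomial.X ^ (m + 1 - 2 * j) := rfl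
    rw [hQ]
    rw [show (Finset.univ.filter
        (fun f : Fin (m+1) → Bool => ∀ i, 0 < ∑ j ∈ Finset.Iic i, step f j))
        = Pos (m+1) from rfl]
    have hmaps : ∀ f ∈ Pos (m+1), kdown f ∈ Finset.range (m/2+1) := by
      intro f hf
      have h := tot_pos f hf
      rw [tot_eq] at h
      rw [Finset.mem_range]
      omega
    rw [← Finset.sum_fiberwise_of_maps_to hmaps]
    refine Finset.sum_congr rfl (fun j hj => ?_)
    have hj2 : 2*j ≤ m := by
      rw [Finset.mem_range] at hj
      omega
    have hterm : ∀ f ∈ (Pos (m+1)).filter (fun f => kdown f = j),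
        (Polynomial.C ((-1:ℚ) ^ (Finset.univ.filter (fun i : Fin (m+1) => f i = false)).card)
            * Polynomial.X ^ (∑ i : Fin (m+1), step f i).toNat : Polynomial ℚ)
          = Polynomial.C ((-1:ℚ)^j) * Polynomial.X ^ (m+1-2*j) := by
      intro f hf
      obtain ⟨hfP, hfk⟩ := Finset.mem_filter.1 hf
      have ht := tot_eq f
      have htn : (∑ i : Fin (m+1), step f i).toNat = m + 1 - 2*j := by
        rw [ht, hfk]
        omega
      rw [htn, show (Finset.univ.filter (fun i : Fin (m+1) => f i = false)).card = kdown f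
        from rfl, hfk]
    rw [Finset.sum_congr rfl hterm, Finset.sum_const]
    rw [show ((Pos (m+1)).filter (fun f => kdown f = j)).card = Nk (m+1) j from rfl]
    rw [← Nk_closed m j hj2]
    rw [nsmul_eq_mul]
    simp only [← Polynomial.C_eq_natCast, ← Polynomial.C_mul]
    rw [Polynomial.C_mul]
    ring
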